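/- Let $h_1, \ldots, h_k$ be a regular sequence in a commutative Noetherian ring $R$, and let $J = \langle h_1, \ldots, h_{k-1} \rangle$. Then $h_k$ is a non-zerodivisor on $R/J^r$ for every integer $r \geq 1$. -/

import Mathlib

open MvPolynomial RingTheory.Sequence

variable {R : Type} [CommRing R]

private lemma degree_eq_sum_univ {n : ℕ} (f : Fin n →₀ ℕ) : f.degree = ∑ i, f i := by
  rw [Finsupp.degree_apply]
  exact Finset.sum_subset (Finset.subset_univ _)
    (fun i _ hi => Finsupp.notMem_support_iff.mp hi)

private lemma monomial_mem_pow {n : ℕ} (x : Fin n → R) (K : Ideal R) (α : Fin n →₀ ℕ)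
    (hx : ∀ i ∈ α.support, x i ∈ K) :
    (α.prod fun i e => x i ^ e) ∈ K ^ α.degree := by
  rw [Finsupp.degree_apply, Finsupp.prod, ← Finset.prod_pow_eq_pow_sum]
  exact Ideal.prod_mem_prod (fun i hi => Ideal.pow_mem_pow (hx i hi) _)

private lemma homog_degree {n : ℕ} {d : ℕ} {F : MvPolynomial (Fin n) R}
    (hF : F.IsHomogeneous d) {α : Fin n →₀ ℕ} (hα : F.coeff α ≠ 0) : α.degree = d := by
  have := hF hα
  rw [Finsupp.degree_eq_weight_one]; exact this

private lemma eval_mem_mul_pow {n d : ℕ} (x : Fin n → R) (K J' : Ideal R)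
    (F : MvPolynomial (Fin n) R) (hF : F.IsHomogeneous d) (hc : ∀ α, F.coeff α ∈ J')
    (hx : ∀ i, x i ∈ K) : eval x F ∈ J' * K ^ d := by
  rw [F.as_sum, map_sum]
  refine Ideal.sum_mem _ (fun α hα => ?_)
  rw [eval_monomial]
  have hdeg : α.degree = d := homog_degree hF (MvPolynomial.mem_support_iff.mp hα)
  exact Ideal.mul_mem_mul (hc α) (hdeg ▸ monomial_mem_pow x K α (fun i _ => hx i))

private lemma exists_homog_eval {n d : ℕ} (x : Fin n → R) {t : R}
    (ht : t ∈ (Ideal.span (Set.range x)) ^ d) :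
    ∃ F : MvPolynomial (Fin n) R, F.IsHomogeneous d ∧ eval x F = t := by
  induction d generalizing t with
  | zero =>
    exact ⟨C t, isHomogeneous_C _ _, eval_C _⟩
  | succ d ih =>
    rw [pow_succ] at ht
    refine Submodule.mul_induction_on ht (fun a ha b hb => ?_) (fun u v ⟨F, hF, hFe⟩ ⟨G, hG, hGe⟩ =>
      ⟨F + G, hF.add hG, by rw [map_add, hFe, hGe]⟩)
    obtain ⟨F, hF, hFe⟩ := ih ha
    obtain ⟨c, hc⟩ := (Submodule.mem_span_range_iff_exists_fun R).mp hb
    refine ⟨F * ∑ i, C (c i) * X i, ?_, ?_⟩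
    · exact hF.mul (IsHomogeneous.sum _ _ _ (fun i _ => (isHomogeneous_C _ _).mul (isHomogeneous_X _ _)))
    · rw [map_mul, hFe, map_sum]
      simp only [map_mul, eval_C, eval_X]
      rw [← hc]
      simp [smul_eq_mul]

private lemma exists_homog_eval' {n d : ℕ} (x : Fin n → R) (K : Ideal R) {t : R}
    (ht : t ∈ K * (Ideal.span (Set.range x)) ^ d) :
    ∃ F : MvPolynomial (Fin n) R, F.IsHomogeneous d ∧ (∀ α, F.coeff α ∈ K) ∧ eval x F = t := by
  refine Submodule.mul_induction_on ht (fun a ha b hb => ?_)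
    (fun u v ⟨F, hF, hFc, hFe⟩ ⟨G, hG, hGc, hGe⟩ =>
      ⟨F + G, hF.add hG, fun α => by rw [coeff_add]; exact add_mem (hFc α) (hGc α),
        by rw [map_add, hFe, hGe]⟩)
  obtain ⟨F, hF, hFe⟩ := exists_homog_eval x hb
  refine ⟨C a * F, by simpa using (isHomogeneous_C _ a).mul hF,
    fun α => by rw [coeff_C_mul]; exact Ideal.mul_mem_right _ _ ha,
    by rw [map_mul, eval_C, hFe]⟩

private lemma ofList_ofFn {n : ℕ} (x : Fin n → R) :
    Ideal.ofList (List.ofFn x) = Ideal.span (Set.range x) := by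
  unfold Ideal.ofList
  congr 1
  ext a
  simp [List.mem_ofFn]

private lemma wreg_split {n : ℕ} (x : Fin (n + 1) → R)
    (hx : IsWeaklyRegular R (List.ofFn x)) :
    IsWeaklyRegular R (List.ofFn (fun i : Fin n => x i.castSucc)) ∧
      (∀ c, x (Fin.last n) * c ∈ Ideal.span (Set.range fun i : Fin n => x i.castSucc) →
        c ∈ Ideal.span (Set.range fun i : Fin n => x i.castSucc)) := by
  rw [List.ofFn_succ', List.concat_eq_append, isWeaklyRegular_append_iff] at hx
  obtain ⟨h1, h2⟩ := hx
  refine ⟨h1, fun c hc => ?_⟩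
  rw [isWeaklyRegular_singleton_iff] at h2
  set J : Ideal R := Ideal.span (Set.range fun i : Fin n => x i.castSucc) with hJ
  have hJ' : Ideal.ofList (List.ofFn fun i : Fin n => x i.castSucc) = J := ofList_ofFn _
  have hsm : (Ideal.ofList (List.ofFn fun i : Fin n => x i.castSucc) • ⊤ : Submodule R R) = J := by
    rw [hJ', Ideal.smul_eq_mul, Ideal.mul_top]
  have key : x (Fin.last n) • (Submodule.Quotient.mk c :
      R ⧸ (Ideal.ofList (List.ofFn fun i : Fin n => x i.castSucc) • ⊤ : Submodule R R)) =
      x (Fin.last n) • (0 : R ⧸ (Ideal.ofList (List.ofFn fun i : Fin n => x i.castSucc) • ⊤ : Submodule R R)) := by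
    rw [smul_zero, ← Submodule.Quotient.mk_smul, Submodule.Quotient.mk_eq_zero, hsm,
      smul_eq_mul]
    exact hc
  have := h2 key
  rwa [Submodule.Quotient.mk_eq_zero, hsm] at this

private def QRStmt (R : Type) [CommRing R] (n : ℕ) : Prop :=
  ∀ x : Fin n → R, IsWeaklyRegular R (List.ofFn x) →
    ∀ (d : ℕ) (F : MvPolynomial (Fin n) R), F.IsHomogeneous d →
      eval x F ∈ (Ideal.span (Set.range x)) ^ (d + 1) →
      ∀ α, F.coeff α ∈ Ideal.span (Set.range x)

private lemma target_of_QR {n : ℕ} (hQR : QRStmt R n) (x : Fin (n + 1) → R)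
    (hx : IsWeaklyRegular R (List.ofFn x)) (r : ℕ) :
    ∀ t, x (Fin.last n) * t ∈ (Ideal.span (Set.range fun i : Fin n => x i.castSucc)) ^ r →
      t ∈ (Ideal.span (Set.range fun i : Fin n => x i.castSucc)) ^ r := by
  obtain ⟨h1, h2⟩ := wreg_split x hx
  induction r with
  | zero => intro t _; simp [pow_zero]
  | succ r ih =>
    intro t ht
    have ht' : t ∈ (Ideal.span (Set.range fun i : Fin n => x i.castSucc)) ^ r :=
      ih t (Ideal.pow_le_pow_right (I := Ideal.span (Set.range fun i : Fin n => x i.castSucc)) (Nat.le_succ r) ht)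
    obtain ⟨F, hF, hFe⟩ := exists_homog_eval (fun i : Fin n => x i.castSucc) ht'
    have hCF : (C (x (Fin.last n)) * F).IsHomogeneous r := by
      simpa using (isHomogeneous_C _ (x (Fin.last n))).mul hF
    have hCFe : eval (fun i : Fin n => x i.castSucc) (C (x (Fin.last n)) * F) ∈
        (Ideal.span (Set.range fun i : Fin n => x i.castSucc)) ^ (r + 1) := by
      rw [map_mul, eval_C, hFe]; exact ht
    have hco := hQR _ h1 r (C (x (Fin.last n)) * F) hCF hCFe
    have hcoF : ∀ α, F.coeff α ∈ Ideal.span (Set.range fun i : Fin n => x i.castSucc) :=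
      fun α => h2 _ (by rw [← coeff_C_mul]; exact hco α)
    have := eval_mem_mul_pow (fun i : Fin n => x i.castSucc)
      (Ideal.span (Set.range fun i : Fin n => x i.castSucc))
      (Ideal.span (Set.range fun i : Fin n => x i.castSucc)) F hF hcoF
      (fun i => Ideal.subset_span ⟨i, rfl⟩)
    rw [← pow_succ'] at this
    rwa [hFe] at this

private lemma degree_add' {n : ℕ} (a b : Fin n →₀ ℕ) :
    (a + b).degree = a.degree + b.degree := by
  simp only [degree_eq_sum_univ, Finsupp.add_apply, Finset.sum_add_distrib]

private lemma degree_single' {n : ℕ} (i : Fin n) (k : ℕ) :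
    (Finsupp.single i k).degree = k := by
  classical
  rw [degree_eq_sum_univ]
  simp [Finsupp.single_apply]

private lemma QR_all : ∀ n : ℕ, QRStmt R n := by
  intro n
  induction n with
  | zero =>
    intro x hx d F hF hev α
    have hrange : Set.range x = ∅ := Set.range_eq_empty x
    rw [hrange, Ideal.span_empty] at hev ⊢
    have hbot : (⊥ : Ideal R) ^ (d + 1) = ⊥ := by
      rw [← Ideal.zero_eq_bot, zero_pow (Nat.succ_ne_zero d)]
    rw [hbot, Ideal.mem_bot] at hev
    have hFC : F = C (F.coeff 0) := eq_C_of_isEmpty F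
    have : F.coeff α = F.coeff 0 := by rw [Subsingleton.elim α 0]
    rw [this, Ideal.mem_bot]
    rw [hFC, eval_C] at hev
    exact hev
  | succ n ih =>
    intro x hx d
    induction d with
    | zero =>
      intro F hF hev α
      by_cases hα : F.coeff α = 0
      · rw [hα]; exact zero_mem _
      · have hα0 : α = 0 := by
          have := homog_degree hF hα
          rwa [Finsupp.degree_eq_zero_iff] at this
        subst hα0
        have hsupp : F.support ⊆ {0} := by
          intro β hβ
          rw [Finset.mem_singleton]
          have := homog_degree hF (MvPolynomial.mem_support_iff.mp hβ)
          rwa [Finsupp.degree_eq_zero_iff] at this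
        have heval : eval x F = F.coeff 0 := by
          conv_lhs => rw [F.as_sum]
          rw [map_sum, Finset.sum_subset hsupp
            (fun β _ hβ => by simp [MvPolynomial.notMem_support_iff.mp hβ])]
          simp [eval_monomial]
        rw [← heval]
        rw [pow_one] at hev
        exact hev
    | succ d ihd =>
      intro F hF hev α
      obtain ⟨h1, h2⟩ := wreg_split x hx
      set Ix := Ideal.span (Set.range x) with hIx
      set x' : Fin n → R := fun i => x i.castSucc with hx'
      set I' := Ideal.span (Set.range x') with hI'
      have hI'le : I' ≤ Ix := Ideal.span_mono (by rintro _ ⟨i, rfl⟩; exact ⟨i.castSucc, rfl⟩)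
      have hxl : x (Fin.last n) ∈ Ix := Ideal.subset_span ⟨Fin.last n, rfl⟩
      rw [pow_succ'] at hev
      obtain ⟨G₀, hG₀h, hG₀c, hG₀e⟩ := exists_homog_eval' x Ix hev
      set F₁ := F - G₀ with hF₁def
      have hF₁h : F₁.IsHomogeneous (d + 1) := hF.sub hG₀h
      have hF₁e : eval x F₁ = 0 := by rw [hF₁def, map_sub, hG₀e, sub_self]
      have key : ∀ β, F₁.coeff β ∈ Ix := by
        classical
        set e : Fin (n + 1) →₀ ℕ := Finsupp.single (Fin.last n) 1 with he
        set sH := F₁.support.filter (fun γ => γ (Fin.last n) ≠ 0) with hsH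
        set sG := F₁.support.filter (fun γ => ¬ γ (Fin.last n) ≠ 0) with hsG
        set H : MvPolynomial (Fin (n + 1)) R :=
          ∑ γ ∈ sH, monomial (γ - e) (F₁.coeff γ) with hH
        set G : MvPolynomial (Fin (n + 1)) R :=
          ∑ γ ∈ sG, monomial γ (F₁.coeff γ) with hG
        have hle : ∀ γ ∈ sH, e ≤ γ := by
          intro γ hγ
          rw [hsH, Finset.mem_filter] at hγ
          rw [he, Finsupp.single_le_iff]
          exact Nat.one_le_iff_ne_zero.mpr hγ.2
        have hXH : (X (Fin.last n) : MvPolynomial (Fin (n + 1)) R) * H =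
            ∑ γ ∈ sH, monomial γ (F₁.coeff γ) := by
          rw [hH, Finset.mul_sum]
          refine Finset.sum_congr rfl (fun γ hγ => ?_)
          rw [X, monomial_mul, one_mul, add_tsub_cancel_of_le (hle γ hγ)]
        have hsplit : F₁ = X (Fin.last n) * H + G := by
          rw [hXH, hG, Finset.sum_filter_add_sum_filter_not]
          exact F₁.as_sum
        have hHh : H.IsHomogeneous d := by
          rw [hH]
          refine IsHomogeneous.sum _ _ _ (fun γ hγ => isHomogeneous_monomial _ ?_)
          have hγs := (Finset.mem_filter.mp hγ).1
          have hdeg : γ.degree = d + 1 :=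
            homog_degree hF₁h (MvPolynomial.mem_support_iff.mp hγs)
          have hγe : γ - e + e = γ := tsub_add_cancel_of_le (hle γ hγ)
          have hde : e.degree = 1 := by rw [he]; exact degree_single' _ _
          have := degree_add' (γ - e) e
          rw [hγe, hdeg, hde] at this
          omega
        have hGe : eval x G ∈ I' ^ (d + 1) := by
          rw [hG, map_sum]
          refine Ideal.sum_mem _ (fun γ hγ => ?_)
          obtain ⟨hγs, hγ0⟩ := Finset.mem_filter.mp hγ
          rw [eval_monomial]
          have hdeg : γ.degree = d + 1 :=
            homog_degree hF₁h (MvPolynomial.mem_support_iff.mp hγs)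
          refine Ideal.mul_mem_left _ _ ?_
          rw [← hdeg]
          refine monomial_mem_pow x I' γ (fun i hi => ?_)
          have hne : i ≠ Fin.last n := by
            intro hEq
            exact (Finsupp.mem_support_iff.mp hi) (by rw [hEq]; exact not_not.mp hγ0)
          obtain ⟨j, rfl⟩ := Fin.exists_castSucc_eq.mpr hne
          exact Ideal.subset_span ⟨j, rfl⟩
        have hmulH : x (Fin.last n) * eval x H = - eval x G := by
          have h0 := hF₁e
          rw [hsplit, map_add, map_mul, eval_X] at h0
          linear_combination h0
        have hevH : eval x H ∈ I' ^ (d + 1) := by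
          refine target_of_QR ih x hx (d + 1) (eval x H) ?_
          rw [← hx', ← hI', hmulH]
          exact neg_mem hGe
        have hHc : ∀ γ, H.coeff γ ∈ Ix :=
          ihd H hHh (Ideal.pow_right_mono hI'le (d + 1) hevH)
        intro β
        by_cases hβ0 : β (Fin.last n) ≠ 0
        · by_cases hβs : β ∈ F₁.support
          · have hβH : β ∈ sH := Finset.mem_filter.mpr ⟨hβs, hβ0⟩
            have hcoef : H.coeff (β - e) = F₁.coeff β := by
              rw [hH, MvPolynomial.coeff_sum]
              rw [Finset.sum_eq_single_of_mem β hβH (fun γ hγ hne => ?_)]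
              · rw [coeff_monomial, if_pos rfl]
              · rw [coeff_monomial, if_neg]
                intro hEq
                apply hne
                have h1' : γ - e + e = γ := tsub_add_cancel_of_le (hle γ hγ)
                have h2' : β - e + e = β := tsub_add_cancel_of_le (hle β hβH)
                rw [← h1', ← h2', hEq]
            exact hcoef ▸ hHc (β - e)
          · rw [MvPolynomial.notMem_support_iff.mp hβs]; exact zero_mem _
        · push_neg at hβ0
          set res : (Fin (n + 1) →₀ ℕ) → (Fin n →₀ ℕ) :=
            fun γ => Finsupp.comapDomain Fin.castSucc γ ((Fin.castSucc_injective n).injOn)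
            with hresdef
          have hresapp : ∀ (γ : Fin (n + 1) →₀ ℕ) (j : Fin n), res γ j = γ j.castSucc :=
            fun γ j => rfl
          have hevalmono : ∀ (γ : Fin (n + 1) →₀ ℕ), γ (Fin.last n) = 0 → ∀ c : R,
              eval x' (monomial (res γ) c) = eval x (monomial γ c) := by
            intro γ hγ c
            rw [eval_monomial, eval_monomial]
            congr 1
            rw [Finsupp.prod_fintype _ _ (fun i => pow_zero _),
              Finsupp.prod_fintype _ _ (fun i => pow_zero _),
              Fin.prod_univ_castSucc]
            simp only [hresapp, hγ, pow_zero, mul_one, hx']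
          have hdegres : ∀ γ : Fin (n + 1) →₀ ℕ, γ (Fin.last n) = 0 →
              (res γ).degree = γ.degree := by
            intro γ hγ
            rw [degree_eq_sum_univ, degree_eq_sum_univ, Fin.sum_univ_castSucc, hγ, add_zero]
            simp only [hresapp]
          set Gbar : MvPolynomial (Fin n) R :=
            ∑ γ ∈ sG, monomial (res γ) (F₁.coeff γ) with hGbar
          have hGbarh : Gbar.IsHomogeneous (d + 1) := by
            rw [hGbar]
            refine IsHomogeneous.sum _ _ _ (fun γ hγ => isHomogeneous_monomial _ ?_)
            obtain ⟨hγs, hγ0⟩ := Finset.mem_filter.mp hγ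
            rw [hdegres γ (not_not.mp hγ0)]
            exact homog_degree hF₁h (MvPolynomial.mem_support_iff.mp hγs)
          have hGbare : eval x' Gbar = eval x G := by
            rw [hGbar, hG, map_sum, map_sum]
            exact Finset.sum_congr rfl
              (fun γ hγ => hevalmono γ (not_not.mp (Finset.mem_filter.mp hγ).2) _)
          obtain ⟨G₁, hG₁h, hG₁e⟩ := exists_homog_eval x' hevH
          set P := Gbar + C (x (Fin.last n)) * G₁ with hP
          have hPh : P.IsHomogeneous (d + 1) :=
            hGbarh.add (by simpa using (isHomogeneous_C _ (x (Fin.last n))).mul hG₁h)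
          have hPe : eval x' P = 0 := by
            rw [hP, map_add, map_mul, eval_C, hG₁e, hGbare, hmulH]
            ring
          have hPc := ih x' h1 (d + 1) P hPh (by rw [hPe]; exact zero_mem _)
          by_cases hβs : β ∈ F₁.support
          · have hβG : β ∈ sG := Finset.mem_filter.mpr ⟨hβs, not_not.mpr hβ0⟩
            have hcoefbar : Gbar.coeff (res β) = F₁.coeff β := by
              rw [hGbar, MvPolynomial.coeff_sum]
              rw [Finset.sum_eq_single_of_mem β hβG (fun γ hγ hne => ?_)]
              · rw [coeff_monomial, if_pos rfl]
              · rw [coeff_monomial, if_neg]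
                intro hEq
                apply hne
                have hγ0 : γ (Fin.last n) = 0 := not_not.mp (Finset.mem_filter.mp hγ).2
                ext i
                refine Fin.lastCases ?_ (fun j => ?_) i
                · rw [hγ0, hβ0]
                · have := congrArg (fun f : Fin n →₀ ℕ => f j) hEq
                  simpa [hresapp] using this
            have hsplit' : F₁.coeff β = P.coeff (res β) - x (Fin.last n) * G₁.coeff (res β) := by
              rw [hP, coeff_add, coeff_C_mul, hcoefbar]; ring
            rw [hsplit']
            exact sub_mem (hI'le (hPc (res β))) (Ideal.mul_mem_right _ _ hxl)
          · rw [MvPolynomial.notMem_support_iff.mp hβs]; exact zero_mem _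
      have hfinal : F.coeff α = F₁.coeff α + G₀.coeff α := by
        rw [hF₁def, coeff_sub]; ring
      rw [hfinal]
      exact add_mem (key α) (hG₀c α)

/-- If `h₁, …, h_k` is a regular sequence in a commutative Noetherian ring `R` and
`J = ⟨h₁, …, h_{k-1}⟩`, then `h_k` is a non-zerodivisor on `R / Jʳ` for every `r ≥ 1`. -/
theorem last_nonZeroDivisor_on_quot_pow {R : Type} [CommRing R] [IsNoetherianRing R]
    {k : ℕ} (h : Fin (k + 1) → R)
    (hreg : RingTheory.Sequence.IsRegular R (List.ofFn h))
    (J : Ideal R) (hJ : J = Ideal.span (Set.range fun i : Fin k => h i.castSucc))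
    (r : ℕ) (hr : 1 ≤ r) :
    ∀ p : R, h (Fin.last k) * p ∈ J ^ r → p ∈ J ^ r := by
  subst hJ
  exact target_of_QR (QR_all k) h hreg.toIsWeaklyRegular r
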